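/- For every k > 0 there exists a unique α > 0 such that ∫_α^∞ (1/α − 1/H)·e^{−H} dH = k. That is, the water-filling threshold equation has a unique positive solution for every positive power-constraint constant k. -/

import Mathlib

open MeasureTheory Real Set

noncomputable def wfF (α : ℝ) : ℝ := ∫ H in Ioi α, (1 / α - 1 / H) * Real.exp (-H)

lemma wf_meas (α : ℝ) : Measurable (fun H : ℝ => (1 / α - 1 / H) * Real.exp (-H)) := by
  have h1 : Measurable fun H : ℝ => 1 / α - 1 / H := by
    simp only [one_div]
    exact measurable_const.sub measurable_inv
  exact h1.mul (Real.measurable_exp.comp measurable_neg)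

lemma wf_exp_int (a : ℝ) : IntegrableOn (fun H : ℝ => Real.exp (-H)) (Ioi a) := by
  simpa using exp_neg_integrableOn_Ioi a (b := 1) one_pos

lemma wf_int {α : ℝ} (hα : 0 < α) {s : Set ℝ} (hs : s ⊆ Ioi α) (hms : MeasurableSet s) :
    IntegrableOn (fun H : ℝ => (1 / α - 1 / H) * Real.exp (-H)) s := by
  have hb : IntegrableOn (fun H : ℝ => (1/α) * Real.exp (-H)) (Ioi α) :=
    (wf_exp_int α).const_mul (1/α)
  refine Integrable.mono' (hb.mono_set hs) ((wf_meas α).aestronglyMeasurable) ?_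
  filter_upwards [ae_restrict_mem hms] with H hH
  have hH' : α < H := hs hH
  have h0 : (0:ℝ) < H := hα.trans hH'
  have h1 : 0 ≤ 1 / α - 1 / H := by
    have := one_div_le_one_div_of_le hα hH'.le
    linarith
  have h2 : 1 / α - 1 / H ≤ 1 / α := by
    have : 0 ≤ 1 / H := by positivity
    linarith
  rw [Real.norm_eq_abs, abs_of_nonneg (mul_nonneg h1 (Real.exp_pos _).le)]
  exact mul_le_mul_of_nonneg_right h2 (Real.exp_pos _).le

lemma wf_nonneg {α : ℝ} (hα : 0 < α) {s : Set ℝ} (hs : s ⊆ Ioi α) (hms : MeasurableSet s) :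
    0 ≤ ∫ H in s, (1 / α - 1 / H) * Real.exp (-H) := by
  refine setIntegral_nonneg hms fun H hH => ?_
  have hH' : α < H := hs hH
  have h1 : 0 ≤ 1 / α - 1 / H := by
    have := one_div_le_one_div_of_le hα hH'.le
    linarith
  exact mul_nonneg h1 (Real.exp_pos _).le

lemma wf_strict_anti {a b : ℝ} (ha : 0 < a) (hab : a < b) : wfF b < wfF a := by
  have hb : 0 < b := ha.trans hab
  have hsplit : wfF a = (∫ H in Ioc a b, (1 / a - 1 / H) * Real.exp (-H))
      + ∫ H in Ioi b, (1 / a - 1 / H) * Real.exp (-H) := by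
    rw [wfF, ← setIntegral_union (Ioc_disjoint_Ioi le_rfl) measurableSet_Ioi
      (wf_int ha Ioc_subset_Ioi_self measurableSet_Ioc)
      (wf_int ha (Ioi_subset_Ioi hab.le) measurableSet_Ioi),
      Ioc_union_Ioi_eq_Ioi hab.le]
  have hdiff : (∫ H in Ioi b, (1 / a - 1 / H) * Real.exp (-H))
      = wfF b + (1/a - 1/b) * Real.exp (-b) := by
    have hfe : (fun H : ℝ => (1 / a - 1 / H) * Real.exp (-H))
        = fun H => (1 / b - 1 / H) * Real.exp (-H) + (1/a - 1/b) * Real.exp (-H) :=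
      funext fun H => by ring
    rw [wfF, hfe, integral_add (wf_int hb le_rfl.subset measurableSet_Ioi)
      ((wf_exp_int b).const_mul _), integral_const_mul, integral_exp_neg_Ioi]
  have hpos : 0 < (1/a - 1/b) * Real.exp (-b) := by
    have : 1/b < 1/a := one_div_lt_one_div_of_lt ha hab
    have := Real.exp_pos (-b)
    nlinarith
  have h1 := wf_nonneg ha (Ioc_subset_Ioi_self (a := b) (b := a)) measurableSet_Ioc
  rw [hsplit, hdiff]
  linarith

lemma wf_inv_meas : Measurable (fun H : ℝ => (1 / H) * Real.exp (-H)) := by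
  simp only [one_div]
  exact measurable_inv.mul (Real.measurable_exp.comp measurable_neg)

lemma wf_inv_int {α : ℝ} (hα : 0 < α) {s : Set ℝ} (hs : s ⊆ Ioi α) (hms : MeasurableSet s) :
    IntegrableOn (fun H : ℝ => (1 / H) * Real.exp (-H)) s := by
  have hb : IntegrableOn (fun H : ℝ => (1/α) * Real.exp (-H)) (Ioi α) :=
    (wf_exp_int α).const_mul (1/α)
  refine Integrable.mono' (hb.mono_set hs) wf_inv_meas.aestronglyMeasurable ?_
  filter_upwards [ae_restrict_mem hms] with H hH
  have hH' : α < H := hs hH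
  have h0 : (0:ℝ) < H := hα.trans hH'
  have h1 : 1 / H ≤ 1 / α := one_div_le_one_div_of_le hα hH'.le
  rw [Real.norm_eq_abs, abs_of_nonneg (mul_nonneg (by positivity) (Real.exp_pos _).le)]
  exact mul_le_mul_of_nonneg_right h1 (Real.exp_pos _).le

lemma wf_g {α : ℝ} (hα : 0 < α) :
    (∫ H in Ioi α, (1 / H) * Real.exp (-H))
      = (∫ H in Ioi 1, (1 / H) * Real.exp (-H)) - ∫ t in (1:ℝ)..α, (1 / t) * Real.exp (-t) := by
  rcases le_total α 1 with hle | hle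
  · rw [intervalIntegral.integral_symm, intervalIntegral.integral_of_le hle]
    have : (∫ H in Ioi α, (1 / H) * Real.exp (-H))
        = (∫ H in Ioc α 1, (1 / H) * Real.exp (-H)) + ∫ H in Ioi 1, (1 / H) * Real.exp (-H) := by
      rw [← setIntegral_union (Ioc_disjoint_Ioi le_rfl) measurableSet_Ioi
        (wf_inv_int hα Ioc_subset_Ioi_self measurableSet_Ioc)
        (wf_inv_int hα (Ioi_subset_Ioi hle) measurableSet_Ioi),
        Ioc_union_Ioi_eq_Ioi hle]
    rw [this]; ring
  · rw [intervalIntegral.integral_of_le hle]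
    have : (∫ H in Ioi 1, (1 / H) * Real.exp (-H))
        = (∫ H in Ioc 1 α, (1 / H) * Real.exp (-H)) + ∫ H in Ioi α, (1 / H) * Real.exp (-H) := by
      rw [← setIntegral_union (Ioc_disjoint_Ioi le_rfl) measurableSet_Ioi
        (wf_inv_int one_pos Ioc_subset_Ioi_self measurableSet_Ioc)
        (wf_inv_int one_pos (Ioi_subset_Ioi hle) measurableSet_Ioi),
        Ioc_union_Ioi_eq_Ioi hle]
    rw [this]; ring

lemma wf_decomp {α : ℝ} (hα : 0 < α) :
    wfF α = Real.exp (-α) * (1 / α) - (∫ H in Ioi 1, (1 / H) * Real.exp (-H))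
      + ∫ t in (1:ℝ)..α, (1 / t) * Real.exp (-t) := by
  have hfe : (fun H : ℝ => (1 / α - 1 / H) * Real.exp (-H))
      = fun H => (1 / α) * Real.exp (-H) - (1 / H) * Real.exp (-H) :=
    funext fun H => by ring
  rw [wfF, hfe, integral_sub ((wf_exp_int α).const_mul (1/α))
      (wf_inv_int hα le_rfl.subset measurableSet_Ioi),
    integral_const_mul, integral_exp_neg_Ioi, wf_g hα]
  ring

lemma wf_contAt {α : ℝ} (hα : 0 < α) : ContinuousAt wfF α := by
  have hcont : ∀ x : ℝ, 0 < x → ContinuousAt (fun t : ℝ => (1 / t) * Real.exp (-t)) x :=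
    fun x hx => ((continuousAt_const.div continuousAt_id hx.ne').mul
      ((Real.continuous_exp.comp continuous_neg).continuousAt))
  have hint : IntervalIntegrable (fun t : ℝ => (1 / t) * Real.exp (-t)) volume 1 α := by
    apply ContinuousOn.intervalIntegrable
    intro t ht
    have ht0 : 0 < t := lt_of_lt_of_le (lt_min one_pos hα) ht.1
    exact (hcont t ht0).continuousWithinAt
  have hderiv := intervalIntegral.integral_hasDerivAt_right hint
    ⟨univ, Filter.univ_mem, wf_inv_meas.aestronglyMeasurable⟩ (hcont α hα)
  have h1 : ContinuousAt (fun x : ℝ => Real.exp (-x) * (1 / x)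
      - (∫ H in Ioi 1, (1 / H) * Real.exp (-H))
      + ∫ t in (1:ℝ)..x, (1 / t) * Real.exp (-t)) α := by
    exact (((Real.continuous_exp.comp continuous_neg).continuousAt.mul
      (continuousAt_const.div continuousAt_id (ne_of_gt hα))).sub continuousAt_const).add
      hderiv.continuousAt
  refine h1.congr ?_
  filter_upwards [IsOpen.mem_nhds isOpen_Ioi hα] with x hx
  exact (wf_decomp hx).symm

lemma wf_lower {a : ℝ} (ha : 0 < a) (ha1 : a < 1) : (1 / a - 1) * Real.exp (-1) ≤ wfF a := by
  have hsplit : wfF a = (∫ H in Ioc a 1, (1 / a - 1 / H) * Real.exp (-H))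
      + ∫ H in Ioi 1, (1 / a - 1 / H) * Real.exp (-H) := by
    rw [wfF, ← setIntegral_union (Ioc_disjoint_Ioi le_rfl) measurableSet_Ioi
      (wf_int ha Ioc_subset_Ioi_self measurableSet_Ioc)
      (wf_int ha (Ioi_subset_Ioi ha1.le) measurableSet_Ioi),
      Ioc_union_Ioi_eq_Ioi ha1.le]
  have h1 : (∫ H in Ioi 1, (1 / a - 1) * Real.exp (-H))
      ≤ ∫ H in Ioi 1, (1 / a - 1 / H) * Real.exp (-H) := by
    refine setIntegral_mono_on ((wf_exp_int 1).const_mul _)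
      (wf_int ha (Ioi_subset_Ioi ha1.le) measurableSet_Ioi) measurableSet_Ioi ?_
    intro H hH
    have hH1 : (1:ℝ) < H := hH
    have : 1 / H ≤ 1 := by rw [div_le_one (by linarith)]; linarith
    have := (Real.exp_pos (-H)).le
    nlinarith
  have h2 : (∫ H in Ioi 1, (1 / a - 1) * Real.exp (-H)) = (1 / a - 1) * Real.exp (-1) := by
    rw [integral_const_mul, integral_exp_neg_Ioi]
  have h0 := wf_nonneg ha (Ioc_subset_Ioi_self (a := 1) (b := a)) measurableSet_Ioc
  rw [hsplit]; rw [h2] at h1; linarith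

lemma wf_upper {b : ℝ} (hb : 0 < b) : wfF b ≤ 1 / b := by
  have h1 : wfF b ≤ ∫ H in Ioi b, (1 / b) * Real.exp (-H) := by
    refine setIntegral_mono_on (wf_int hb le_rfl.subset measurableSet_Ioi)
      ((wf_exp_int b).const_mul _) measurableSet_Ioi ?_
    intro H hH
    have hH' : b < H := hH
    have h0 : (0:ℝ) < H := hb.trans hH'
    have : 0 ≤ 1 / H := by positivity
    have := (Real.exp_pos (-H)).le
    nlinarith
  have h2 : (∫ H in Ioi b, (1 / b) * Real.exp (-H)) = (1 / b) * Real.exp (-b) := by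
    rw [integral_const_mul, integral_exp_neg_Ioi]
  have h3 : Real.exp (-b) ≤ 1 := Real.exp_le_one_iff.mpr (by linarith)
  have : (1 / b) * Real.exp (-b) ≤ 1 / b * 1 :=
    mul_le_mul_of_nonneg_left h3 (by positivity)
  rw [h2] at h1; linarith

/-- For every power-constraint constant `k > 0`, the water-filling threshold equation
`∫_α^∞ (1/α − 1/H)·e^{−H} dH = k` has a unique positive solution `α`. -/
theorem wf_threshold_exists_unique (k : ℝ) (hk : 0 < k) :
    ∃! α : ℝ, 0 < α ∧ (∫ H in Ioi α, (1 / α - 1 / H) * Real.exp (-H)) = k := by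
  have he : (0:ℝ) < Real.exp 1 := Real.exp_pos 1
  set a : ℝ := 1 / (2 * (k * Real.exp 1 + 1)) with ha_def
  have hden : (0:ℝ) < 2 * (k * Real.exp 1 + 1) := by nlinarith
  have ha : 0 < a := by positivity
  have ha1 : a < 1 := by
    rw [ha_def, div_lt_one hden]; nlinarith
  have hFa : k < wfF a := by
    have hlow := wf_lower ha ha1
    have h1a : 1 / a = 2 * (k * Real.exp 1 + 1) := by
      rw [ha_def, one_div_one_div]
    have hexp : Real.exp (-1) = (Real.exp 1)⁻¹ := by
      rw [Real.exp_neg]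
    have : k < (1 / a - 1) * Real.exp (-1) := by
      rw [h1a, hexp, inv_eq_one_div, mul_one_div, lt_div_iff₀ he]
      nlinarith
    linarith
  set b : ℝ := max (a + 1) (2 / k) with hb_def
  have hab : a < b := lt_of_lt_of_le (by linarith) (le_max_left _ _)
  have hb : 0 < b := ha.trans hab
  have hFb : wfF b < k := by
    have h2k : 2 / k ≤ b := le_max_right _ _
    have : 1 / b ≤ k / 2 := by
      rw [div_le_div_iff₀ hb (by norm_num)]
      calc (1:ℝ) * 2 = 2 := by ring
        _ = (2 / k) * k := by field_simp
        _ ≤ k * b := by nlinarith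
    have := wf_upper hb
    linarith
  have hcont : ContinuousOn wfF (Icc a b) := fun x hx =>
    (wf_contAt (lt_of_lt_of_le ha hx.1)).continuousWithinAt
  have hk_mem : k ∈ Icc (wfF b) (wfF a) := ⟨hFb.le, hFa.le⟩
  obtain ⟨α, hαmem, hαk⟩ := intermediate_value_Icc' hab.le hcont hk_mem
  have hαpos : 0 < α := lt_of_lt_of_le ha hαmem.1
  refine ⟨α, ⟨hαpos, hαk⟩, ?_⟩
  rintro β ⟨hβpos, hβk⟩
  have hβk' : wfF β = k := hβk
  rcases lt_trichotomy β α with h | h | h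
  · have := wf_strict_anti hβpos h
    rw [hαk, hβk'] at this
    exact absurd this (lt_irrefl k)
  · exact h
  · have := wf_strict_anti hαpos h
    rw [hαk, hβk'] at this
    exact absurd this (lt_irrefl k)
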